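/- Let V be a real inner product space of dimension 2n, J : V → V a linear isometry with J² = -id, and A : V → V a self-adjoint linear map with J ∘ A = -(A ∘ J). Then the operator I - A has at most n negative eigenvalues (counted with multiplicity); equivalently, the maximal dimension of a subspace on which the quadratic form v ↦ g((I - A)v, v) is negative definite is at most n. -/
import Mathlib


open scoped RealInnerProductSpace

/-- If `dim V = 2n`, `J` is a compatible complex structure and `A` is
self-adjoint anticommuting with `J`, then any subspace on which the quadratic
form `v ↦ ⟪(I - A) v, v⟫` is negative definite has dimension at most `n`. -/
theorem stmt_8 (n : ℕ) (V : Type*) [NormedAddCommGroup V] [InnerProductSpace ℝ V]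
    [FiniteDimensional ℝ V] (hdim : Module.finrank ℝ V = 2 * n)
    (J A : V →ₗ[ℝ] V) (hJ2 : ∀ v : V, J (J v) = -v)
    (hJg : ∀ u v : V, ⟪J u, J v⟫ = ⟪u, v⟫)
    (hA : ∀ u v : V, ⟪A u, v⟫ = ⟪u, A v⟫)
    (hanti : ∀ v : V, J (A v) = -(A (J v))) :
    ∀ W : Submodule ℝ V,
      (∀ v ∈ W, v ≠ 0 → ⟪((LinearMap.id : V →ₗ[ℝ] V) - A) v, v⟫ < 0) →
      Module.finrank ℝ W ≤ n := by
  intro W hW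
  -- J is a linear equivalence
  have hJinj : Function.Injective J := by
    intro u v huv
    have : J (J u) = J (J v) := by rw [huv]
    rw [hJ2, hJ2, neg_inj] at this
    exact this
  let Je : V ≃ₗ[ℝ] V := LinearEquiv.ofInjectiveEndo J hJinj
  -- key: W and J(W) are disjoint
  have hdisj : Disjoint W (W.map J) := by
    rw [disjoint_iff_inf_le]
    intro v hv
    obtain ⟨hvW, hvJ⟩ := hv
    by_contra hv0
    have hvne : v ≠ 0 := fun h => hv0 (h ▸ Submodule.zero_mem _)
    obtain ⟨u, huW, huv⟩ := hvJ
    -- J v = J (J u) = -u ∈ W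
    have hJvW : J v ∈ W := by
      have : J v = -u := by rw [← huv, hJ2]
      rw [this]
      exact W.neg_mem huW
    have hJvne : J v ≠ 0 := by
      intro h
      exact hvne (hJinj (by rw [h]; exact (map_zero J).symm))
    have h1 := hW v hvW hvne
    have h2 := hW (J v) hJvW hJvne
    simp only [LinearMap.sub_apply, LinearMap.id_apply, inner_sub_left] at h1 h2
    -- ⟪A (J v), J v⟫ = -⟪A v, v⟫
    have key : ⟪A (J v), J v⟫ = -⟪A v, v⟫ := by
      have hAJ : A (J v) = -(J (A v)) := by
        have := hanti v
        rw [eq_comm, neg_eq_iff_eq_neg] at this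
        rw [this]
      rw [hAJ, inner_neg_left, hJg]
    have hp1 : (0:ℝ) < ⟪v, v⟫ := by
      rw [real_inner_self_eq_norm_sq]; exact pow_pos (norm_pos_iff.mpr hvne) 2
    have hp2 : (0:ℝ) < ⟪J v, J v⟫ := by
      rw [real_inner_self_eq_norm_sq]; exact pow_pos (norm_pos_iff.mpr hJvne) 2
    nlinarith [h1, h2, key, hp1, hp2]
  have hrankmap : Module.finrank ℝ (W.map J) = Module.finrank ℝ W := by
    have : W.map J = W.map (Je : V →ₗ[ℝ] V) := rfl
    rw [this, LinearEquiv.finrank_map_eq]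
  have := Submodule.finrank_add_finrank_le_of_disjoint hdisj
  rw [hrankmap, hdim] at this
  omega
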